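/- Let N ≥ 2 and define the Roland–Cerf optimal schedule s_o(τ) = 1/2 + (1/(2√(N−1))) tan((2τ − 1) arctan(√(N−1))) for τ ∈ [0,1], and Δ(s) = √(1 − 4(1 − 1/N) s (1 − s)). Then s_o(0) = 0, s_o(1) = 1, s_o is strictly increasing and differentiable on [0,1], and its derivative satisfies the local adiabatic condition s_o'(τ) = (N arctan(√(N−1))/√(N−1)) · Δ(s_o(τ))² for all τ ∈ [0,1]; in particular s_o'(τ) is proportional to the square of the instantaneous spectral gap. -/

import Mathlib

lemma rc_algebra (N r t : ℝ) (hN : (2:ℝ) ≤ N) (hr : 0 < r) (hr2 : r^2 = N - 1) :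
    1 - 4 * (1 - 1 / N) * (1/2 + 1/(2*r) * t) * (1 - (1/2 + 1/(2*r) * t)) = (1 + t^2)/N := by
  have hN0 : N ≠ 0 := by linarith
  have hr0 : r ≠ 0 := ne_of_gt hr
  field_simp
  linear_combination (-(4*t^2)) * hr2

/-- For `N ≥ 2`, the Roland–Cerf optimal schedule
`s_o(τ) = 1/2 + (1/(2√(N−1))) tan((2τ − 1) arctan √(N−1))` satisfies `s_o 0 = 0`,
`s_o 1 = 1`, is strictly increasing and differentiable on `[0,1]`, and its derivative
satisfies the local adiabatic condition
`s_o'(τ) = (N arctan(√(N−1))/√(N−1)) · Δ(s_o(τ))²` with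
`Δ(s) = √(1 − 4(1 − 1/N)s(1 − s))`; in particular `s_o'` is proportional to the
square of the instantaneous spectral gap. -/
theorem roland_cerf_schedule_local_adiabatic_condition
    (N : ℕ) (hN : 2 ≤ N)
    (Δ : ℝ → ℝ)
    (hΔ : ∀ s, Δ s = Real.sqrt (1 - 4 * (1 - 1 / (N : ℝ)) * s * (1 - s)))
    (so : ℝ → ℝ)
    (hso : ∀ τ, so τ = 1 / 2 + (1 / (2 * Real.sqrt ((N : ℝ) - 1)))
      * Real.tan ((2 * τ - 1) * Real.arctan (Real.sqrt ((N : ℝ) - 1)))) :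
    so 0 = 0 ∧ so 1 = 1 ∧ StrictMonoOn so (Set.Icc 0 1) ∧
      ∀ τ ∈ Set.Icc (0 : ℝ) 1,
        HasDerivAt so
          (((N : ℝ) * Real.arctan (Real.sqrt ((N : ℝ) - 1)) / Real.sqrt ((N : ℝ) - 1))
            * (Δ (so τ)) ^ 2) τ := by
  have hN2 : (2:ℝ) ≤ (N:ℝ) := by exact_mod_cast hN
  set r := Real.sqrt ((N:ℝ) - 1) with hrdef
  set a := Real.arctan r with hadef
  have hN1 : (1:ℝ) ≤ (N:ℝ) - 1 := by linarith
  have hr2 : r ^ 2 = (N:ℝ) - 1 := Real.sq_sqrt (by linarith)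
  have hr : 0 < r := Real.sqrt_pos.mpr (by linarith)
  have hr0 : r ≠ 0 := ne_of_gt hr
  have ha : 0 < a := by
    have := Real.arctan_strictMono hr
    rw [Real.arctan_zero] at this
    exact this
  have ha2 : a < Real.pi / 2 := Real.arctan_lt_pi_div_two r
  have htan : Real.tan a = r := Real.tan_arctan r
  -- endpoints
  have h0 : so 0 = 0 := by
    rw [hso]
    have : (2 * (0:ℝ) - 1) * a = -a := by ring
    rw [this, Real.tan_neg, htan]
    field_simp
    ring
  have h1 : so 1 = 1 := by
    rw [hso]
    have : (2 * (1:ℝ) - 1) * a = a := by ring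
    rw [this, htan]
    field_simp
    ring
  -- derivative
  have hderiv : ∀ τ ∈ Set.Icc (0:ℝ) 1,
      HasDerivAt so (((N:ℝ) * a / r) * (Δ (so τ))^2) τ := by
    intro τ hτ
    obtain ⟨hτ0, hτ1⟩ := hτ
    set θ := (2 * τ - 1) * a with hθdef
    have hθmem : θ ∈ Set.Ioo (-(Real.pi/2)) (Real.pi/2) := by
      constructor
      · nlinarith
      · nlinarith
    have hcos : Real.cos θ ≠ 0 :=
      ne_of_gt (Real.cos_pos_of_mem_Ioo hθmem)
    have hcos2 : (1:ℝ) / Real.cos θ ^ 2 = 1 + Real.tan θ ^ 2 := by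
      rw [Real.tan_eq_sin_div_cos]
      have hsq : Real.sin θ ^ 2 + Real.cos θ ^ 2 = 1 := Real.sin_sq_add_cos_sq θ
      field_simp
      linarith
    -- inner derivative
    have hinner : HasDerivAt (fun τ : ℝ => (2 * τ - 1) * a) (2 * a) τ := by
      have : HasDerivAt (fun τ : ℝ => (2 * τ - 1) * a) (2 * a) τ := by
        simpa using (((hasDerivAt_id τ).const_mul 2).sub_const 1).mul_const a
      exact this
    have htand : HasDerivAt (fun τ : ℝ => Real.tan ((2 * τ - 1) * a))
        ((1 / Real.cos θ ^ 2) * (2 * a)) τ :=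
      by have := (Real.hasDerivAt_tan hcos).comp τ hinner; exact this
    have hso' : HasDerivAt so (1 / (2 * r) * ((1 / Real.cos θ ^ 2) * (2 * a))) τ := by
      have := (htand.const_mul (1 / (2 * r))).const_add (1/2 : ℝ)
      have heq : so = fun τ => 1/2 + 1 / (2 * r) * Real.tan ((2 * τ - 1) * a) := by
        funext x; rw [hso x]
      rw [heq]
      exact this
    -- value of Δ(so τ)^2
    have hΔsq : (Δ (so τ))^2 = (1 + Real.tan θ ^ 2) / (N : ℝ) := by
      rw [hΔ, hso]
      rw [Real.sq_sqrt]
      · exact rc_algebra (N:ℝ) r (Real.tan θ) hN2 hr hr2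
      · rw [rc_algebra (N:ℝ) r (Real.tan θ) hN2 hr hr2]
        positivity
    have hval : 1 / (2 * r) * ((1 / Real.cos θ ^ 2) * (2 * a))
        = ((N:ℝ) * a / r) * (Δ (so τ))^2 := by
      rw [hΔsq, hcos2]
      have hN0 : (N:ℝ) ≠ 0 := by linarith
      field_simp
    rw [← hval]
    exact hso'
  refine ⟨h0, h1, ?_, hderiv⟩
  -- strict mono
  have hcont : ContinuousOn so (Set.Icc 0 1) := fun x hx =>
    ((hderiv x hx).continuousAt).continuousWithinAt
  apply strictMonoOn_of_deriv_pos (convex_Icc 0 1) hcont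
  intro x hx
  rw [interior_Icc] at hx
  have hx' : x ∈ Set.Icc (0:ℝ) 1 := Set.mem_Icc.mpr ⟨le_of_lt hx.1, le_of_lt hx.2⟩
  rw [(hderiv x hx').deriv]
  have hΔpos : 0 < (Δ (so x))^2 := by
    rw [hΔ, hso]
    rw [Real.sq_sqrt]
    · rw [rc_algebra (N:ℝ) r _ hN2 hr hr2]; positivity
    · rw [rc_algebra (N:ℝ) r _ hN2 hr hr2]; positivity
  have : 0 < (N:ℝ) * a / r := by positivity
  positivity
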